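/- Let S and T be disjoint finite sets, and let T₁ and T₂ be disjoint subsets of T with T₁ ∪ T₂ = T. Let H be a bipartite graph with bipartition (S,T), and suppose that |N_H(Y)| ≥ |Y ∩ T₁| + (1/2)·|Y ∩ T₂| for every Y ⊆ T. Then H has a subgraph F with V(F) ⊇ T₁ ∪ T₂ such that every connected component A of F is a path satisfying one of: (I') |V(A)| = 2; or (II') |V(A) ∩ T₂| = 2 and the two vertices of V(A) ∩ T₂ are the two endvertices of A. -/

import Mathlib

open SimpleGraph

/-- The neighbourhood `N_H(X) = (⋃_{u ∈ X} N_H(u)) − X` of a set of vertices. -/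
def nbhdSet {V : Type*} (H : SimpleGraph V) (X : Set V) : Set V :=
  {v | v ∉ X ∧ ∃ u ∈ X, H.Adj u v}

namespace BLF


def consec {α : Type*} (b : List α) (u v : α) : Prop :=
  ∃ i : ℕ, ∃ (h : i + 1 < b.length), b[i]'(by omega) = u ∧ b[i+1]'h = v

section
variable {α : Type*}
theorem consec_mem_left {b : List α} {u v : α} (h : consec b u v) : u ∈ b := by
  obtain ⟨i, h', hu, hv⟩ := h; exact hu ▸ List.getElem_mem _

theorem consec_mem_right {b : List α} {u v : α} (h : consec b u v) : v ∈ b := by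
  obtain ⟨i, h', hu, hv⟩ := h; exact hv ▸ List.getElem_mem _

theorem consec_rel {R : α → α → Prop} {b : List α} {u v : α}
    (hc : b.Chain' R) (h : consec b u v) : R u v := by
  obtain ⟨i, h', hu, hv⟩ := h
  have := List.isChain_iff_getElem.mp hc i (by omega)
  simpa [List.get_eq_getElem, hu, hv] using this

theorem consec_indexOf [DecidableEq α] {b : List α} {u v : α}
    (hnd : b.Nodup) (h : consec b u v) :
    b.idxOf v = b.idxOf u + 1 := by
  obtain ⟨i, h', hu, hv⟩ := h
  subst hu hv
  rw [List.Nodup.idxOf_getElem hnd, List.Nodup.idxOf_getElem hnd]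

theorem consec_of_indexOf [DecidableEq α] {b : List α} {u v : α}
    (hu : u ∈ b) (hv : v ∈ b) (h : b.idxOf v = b.idxOf u + 1) :
    consec b u v := by
  have hu' : b.idxOf u < b.length := List.idxOf_lt_length_iff.2 hu
  have hv' : b.idxOf v < b.length := List.idxOf_lt_length_iff.2 hv
  refine ⟨b.idxOf u, by omega, List.getElem_idxOf _, ?_⟩
  have : b.idxOf u + 1 = b.idxOf v := h.symm
  simp_rw [this]
  exact List.getElem_idxOf _
end

def blocksSub {V : Type*} (H : SimpleGraph V) (bs : List (List V)) : H.Subgraph where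
  verts := {v | ∃ b ∈ bs, v ∈ b}
  Adj u v := H.Adj u v ∧ ∃ b ∈ bs, consec b u v ∨ consec b v u
  adj_sub h := h.1
  edge_vert {u v} h := ⟨h.2.choose, h.2.choose_spec.1,
    h.2.choose_spec.2.elim consec_mem_left consec_mem_right⟩
  symm := ⟨fun u v h => ⟨h.1.symm, h.2.choose, h.2.choose_spec.1, h.2.choose_spec.2.symm⟩⟩

theorem blocksSub_adj {V : Type*} {H : SimpleGraph V} {bs : List (List V)} {u v : V} :
    (blocksSub H bs).Adj u v ↔ H.Adj u v ∧ ∃ b ∈ bs, consec b u v ∨ consec b v u := Iff.rfl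


/-- Split a list into consecutive pairs. -/
def pairs : List α → List (List α)
  | a :: b :: r => [a, b] :: pairs r
  | _ => []

theorem pairs_shape : ∀ {l : List α} {c : List α}, c ∈ pairs l →
    ∃ a b, c = [a, b] ∧ consec l a b
  | a :: b :: r, c, hc => by
    rcases List.mem_cons.1 hc with rfl | hc
    · exact ⟨a, b, rfl, 0, by simp +arith, rfl, rfl⟩
    · obtain ⟨x, y, rfl, i, hi, hx, hy⟩ := pairs_shape hc
      exact ⟨x, y, rfl, i + 2, by simp at hi ⊢; omega, by simpa using hx, by simpa using hy⟩

theorem pairs_sub {l c : List α} (hc : c ∈ pairs l) {v : α} (hv : v ∈ c) : v ∈ l := by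
  obtain ⟨a, b, rfl, i, hi, hx, hy⟩ := pairs_shape hc
  rcases List.mem_cons.1 hv with rfl | hv
  · exact hx ▸ List.getElem_mem _
  · rcases List.mem_cons.1 hv with rfl | hv
    · exact hy ▸ List.getElem_mem _
    · cases hv

theorem pairs_cover : ∀ {l : List α}, Even l.length → ∀ {v}, v ∈ l → ∃ c ∈ pairs l, v ∈ c
  | [], _, v, hv => by cases hv
  | [a], he, v, hv => by simp at he
  | a :: b :: r, he, v, hv => by
    rcases List.mem_cons.1 hv with rfl | hv
    · exact ⟨[v, b], by simp [pairs], by simp⟩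
    · rcases List.mem_cons.1 hv with rfl | hv
      · exact ⟨[a, v], by simp [pairs], by simp⟩
      · have : Even r.length := by
          simp only [List.length_cons] at he ⊢
          rcases he with ⟨k, hk⟩; exact ⟨k - 1, by omega⟩
        obtain ⟨c, hc, hvc⟩ := pairs_cover this hv
        exact ⟨c, by simp [pairs, hc], hvc⟩

theorem pairs_uniq : ∀ {l : List α}, l.Nodup → ∀ {c c' : List α}, c ∈ pairs l → c' ∈ pairs l →
    ∀ {v}, v ∈ c → v ∈ c' → c = c'
  | a :: b :: r, hnd, c, c', hc, hc', v, hv, hv' => by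
    have hndr : r.Nodup := ((List.nodup_cons.1 (List.nodup_cons.1 hnd).2)).2
    rcases List.mem_cons.1 hc with rfl | hc <;> rcases List.mem_cons.1 hc' with h2 | h2
    · rw [h2]
    · exfalso
      have h1 : v ∈ r := pairs_sub h2 hv'
      have : v = a ∨ v = b := by simpa using hv
      rcases this with rfl | rfl
      · exact (List.nodup_cons.1 hnd).1 (by simp [h1])
      · exact (List.nodup_cons.1 (List.nodup_cons.1 hnd).2).1 h1
    · exfalso
      have h1 : v ∈ r := pairs_sub hc hv
      have : v = a ∨ v = b := by rw [h2] at hv'; simpa using hv'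
      rcases this with rfl | rfl
      · exact (List.nodup_cons.1 hnd).1 (by simp [h1])
      · exact (List.nodup_cons.1 (List.nodup_cons.1 hnd).2).1 h1
    · exact pairs_uniq hndr hc h2 hv hv'
  | [], _, c, c', hc, _, _, _, _ => by cases hc
  | [a], _, c, c', hc, _, _, _, _ => by cases hc


theorem blocks_subgraph {V : Type*} [DecidableEq V] (H : SimpleGraph V) (bs : List (List V))
    (h2 : ∀ b ∈ bs, b.Chain' H.Adj)
    (h3 : ∀ b ∈ bs, b.Nodup)
    (h4 : ∀ b ∈ bs, ∀ b' ∈ bs, ∀ v, v ∈ b → v ∈ b' → b = b') :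
    ∃ F : H.Subgraph, F.verts = {v | ∃ b ∈ bs, v ∈ b} ∧
      ∀ A : F.coe.ConnectedComponent, ∃ b ∈ bs,
        Nat.card A.supp = b.length ∧
        ∃ φ : F.coe.induce A.supp ≃g pathGraph b.length,
          ∀ v : A.supp, ((v : F.verts) : V) ∈ b ∧
            ((φ v : Fin b.length) : ℕ) = b.idxOf ((v : F.verts) : V) := by
  classical
  refine ⟨blocksSub H bs, rfl, ?_⟩
  set F : H.Subgraph := blocksSub H bs with hF
  intro A
  have hmem : ∀ b, b ∈ bs → ∀ v, v ∈ b → v ∈ F.verts := fun b hb v hv => ⟨b, hb, hv⟩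
  have hadjc : ∀ b, b ∈ bs → ∀ {u v : V}, consec b u v → F.Adj u v := by
    intro b hb u v hc
    exact ⟨consec_rel (h2 b hb) hc, b, hb, Or.inl hc⟩
  have reach0 : ∀ b, ∀ (hb : b ∈ bs), ∀ (k : ℕ) (hk : k < b.length),
      F.coe.Reachable ⟨b[0]'(by omega), hmem b hb _ (List.getElem_mem (by omega))⟩
        ⟨b[k], hmem b hb _ (List.getElem_mem hk)⟩ := by
    intro b hb k
    induction k with
    | zero => intro hk; exact Reachable.refl _
    | succ k ih =>
      intro hk
      refine (ih (by omega)).trans (Adj.reachable ?_)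
      rw [Subgraph.coe_adj]
      exact hadjc b hb ⟨k, hk, rfl, rfl⟩
  have reach : ∀ b, ∀ (hb : b ∈ bs), ∀ u v : F.verts, (u : V) ∈ b → (v : V) ∈ b →
      F.coe.Reachable u v := by
    intro b hb u v hu hv
    have hu' : b.idxOf (u : V) < b.length := List.idxOf_lt_length_iff.2 hu
    have hv' : b.idxOf (v : V) < b.length := List.idxOf_lt_length_iff.2 hv
    have eu : (⟨b[b.idxOf (u : V)], hmem b hb _ (List.getElem_mem hu')⟩ : F.verts) = u :=
      Subtype.ext (List.getElem_idxOf _)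
    have ev : (⟨b[b.idxOf (v : V)], hmem b hb _ (List.getElem_mem hv')⟩ : F.verts) = v :=
      Subtype.ext (List.getElem_idxOf _)
    rw [← eu, ← ev]
    exact (reach0 b hb _ hu').symm.trans (reach0 b hb _ hv')
  have closed : ∀ b, b ∈ bs → ∀ u v : F.verts, F.coe.Adj u v → (u : V) ∈ b → (v : V) ∈ b := by
    intro b hb u v hadj hu
    rw [Subgraph.coe_adj] at hadj
    obtain ⟨-, b', hb', hcc⟩ := hadj
    have hub' : (u : V) ∈ b' := hcc.elim consec_mem_left consec_mem_right
    have : b = b' := h4 b hb b' hb' _ hu hub'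
    subst this
    exact hcc.elim consec_mem_right consec_mem_left
  have closedR : ∀ b, b ∈ bs → ∀ u v : F.verts, F.coe.Reachable u v →
      (u : V) ∈ b → (v : V) ∈ b := by
    intro b hb u v hr hu
    obtain ⟨w⟩ := hr
    induction w with
    | nil => exact hu
    | cons h p ih => exact ih (closed b hb _ _ h hu)
  obtain ⟨u₀, hu₀⟩ := Quot.exists_rep A
  obtain ⟨b, hb, hub⟩ := u₀.2
  refine ⟨b, hb, ?_⟩
  have hsupp : ∀ v : F.verts, v ∈ A.supp ↔ (v : V) ∈ b := by
    intro v
    rw [ConnectedComponent.mem_supp_iff, ← hu₀]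
    constructor
    · intro h
      exact closedR b hb u₀ v ((ConnectedComponent.eq.1 h).symm) hub
    · intro h
      exact ConnectedComponent.sound (reach b hb v u₀ h hub)
  have hnd := h3 b hb
  have hltu : ∀ v : A.supp, b.idxOf ((v : F.verts) : V) < b.length :=
    fun v => List.idxOf_lt_length_iff.2 ((hsupp _).1 v.2)
  let e : A.supp ≃ Fin b.length :=
    { toFun := fun v => ⟨b.idxOf ((v : F.verts) : V), hltu v⟩
      invFun := fun i => ⟨⟨b[(i : ℕ)], hmem b hb _ (List.getElem_mem i.2)⟩,
        (hsupp _).2 (List.getElem_mem i.2)⟩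
      left_inv := fun v => by
        apply Subtype.ext; apply Subtype.ext
        exact List.getElem_idxOf _
      right_inv := fun i => by
        apply Fin.ext
        exact List.Nodup.idxOf_getElem hnd _ i.2 }
  have hFadj : ∀ u v : A.supp, (F.coe.induce A.supp).Adj u v ↔
      (consec b ((u : F.verts) : V) ((v : F.verts) : V) ∨
       consec b ((v : F.verts) : V) ((u : F.verts) : V)) := by
    intro u v
    rw [show (F.coe.induce A.supp).Adj u v ↔ F.coe.Adj u v from comap_adj,
      Subgraph.coe_adj]
    constructor
    · rintro ⟨-, b', hb', hcc⟩
      have hub' : ((u : F.verts) : V) ∈ b' := hcc.elim consec_mem_left consec_mem_right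
      have : b = b' := h4 b hb b' hb' _ ((hsupp _).1 u.2) hub'
      subst this; exact hcc
    · intro hcc
      rcases hcc with hcc | hcc
      · exact hadjc b hb hcc
      · exact (hadjc b hb hcc).symm
  refine ⟨by rw [Nat.card_congr e]; simp, ⟨{ toEquiv := e, map_rel_iff' := ?_ }, ?_⟩⟩
  · intro u v
    rw [hFadj u v, pathGraph_adj]
    constructor
    · rintro (h | h)
      · exact Or.inl (consec_of_indexOf ((hsupp _).1 u.2) ((hsupp _).1 v.2) h.symm)
      · exact Or.inr (consec_of_indexOf ((hsupp _).1 v.2) ((hsupp _).1 u.2) h.symm)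
    · rintro (h | h)
      · exact Or.inl (consec_indexOf hnd h).symm
      · exact Or.inr (consec_indexOf hnd h).symm
  · intro v
    exact ⟨(hsupp _).1 v.2, rfl⟩




/-- Tail of a walk: starts at an `S`-vertex, alternates, interior `T`-vertices in `T₁`,
and if it ends at a `T`-vertex then that vertex is in `T₂`. -/
inductive TailSpec {V : Type*} (S T₁ T₂ : Set V) : List V → Prop
  | single (s : V) (hs : s ∈ S) : TailSpec S T₁ T₂ [s]
  | pair (s t : V) (hs : s ∈ S) (ht : t ∈ T₂) : TailSpec S T₁ T₂ [s, t]
  | cons (s t : V) (rest : List V) (hs : s ∈ S) (ht : t ∈ T₁)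
      (h : TailSpec S T₁ T₂ rest) : TailSpec S T₁ T₂ (s :: t :: rest)

theorem TailSpec.ne_nil {V : Type*} {S T₁ T₂ : Set V} {w : List V}
    (h : TailSpec S T₁ T₂ w) : w ≠ [] := by cases h <;> simp

end BLF

open BLF in
/-- Lemma 3.1.1. -/
theorem bipartite_linear_forest_aux {V : Type*} [Fintype V] (S T T₁ T₂ : Set V)
    (hST : Disjoint S T) (hSTuniv : S ∪ T = Set.univ)
    (hT1 : T₁ ⊆ T) (hT2 : T₂ ⊆ T) (hT12 : Disjoint T₁ T₂) (hT12T : T₁ ∪ T₂ = T)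
    (H : SimpleGraph V)
    (hbip : ∀ u v, H.Adj u v → (u ∈ S ∧ v ∈ T) ∨ (u ∈ T ∧ v ∈ S))
    (hN : ∀ Y ⊆ T,
      ((Y ∩ T₁).ncard : ℚ) + (1 / 2) * ((Y ∩ T₂).ncard : ℚ) ≤ ((nbhdSet H Y).ncard : ℚ)) :
    ∃ F : H.Subgraph, T₁ ∪ T₂ ⊆ F.verts ∧
      ∀ A : F.coe.ConnectedComponent,
        -- every component is a path
        (∃ n, Nonempty (F.coe.induce A.supp ≃g SimpleGraph.pathGraph n)) ∧
        -- (I'): the component has exactly two vertices, or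
        (Nat.card A.supp = 2 ∨
          -- (II'): `|V(A) ∩ T₂| = 2` and the two vertices of `V(A) ∩ T₂` are the
          -- endvertices of the path `A`.
          (∃ (n : ℕ) (hn : 2 ≤ n)
              (φ : F.coe.induce A.supp ≃g SimpleGraph.pathGraph n),
              ∀ v : A.supp, ((v : F.verts) : V) ∈ T₂ ↔
                (φ v = (⟨0, by omega⟩ : Fin n) ∨ φ v = (⟨n - 1, by omega⟩ : Fin n)))) := by
  classical
  -- finset of neighbours
  set nb : V → Finset V := fun t => Finset.univ.filter (fun s' => H.Adj t s') with hnb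
  have mem_nb : ∀ t v, v ∈ nb t ↔ H.Adj t v := by intro t v; simp [hnb]
  -- the "left" vertices: two copies of each vertex of T₁, one copy of each vertex of T₂
  set L : Finset (V × Fin 2) :=
    Finset.univ.filter (fun l => l.1 ∈ T₁ ∨ (l.1 ∈ T₂ ∧ l.2 = 0)) with hLdef
  have hL : ∀ l : V × Fin 2, l ∈ L ↔ (l.1 ∈ T₁ ∨ (l.1 ∈ T₂ ∧ l.2 = 0)) := by
    intro l; simp [hLdef]
  have hLT : ∀ l : V × Fin 2, l ∈ L → l.1 ∈ T := by
    intro l hl; rcases (hL l).1 hl with h | h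
    exacts [hT1 h, hT2 h.1]
  -- vertices of `S` are not in `T` and vice versa
  have hSnT : ∀ v, v ∈ S → v ∉ T := fun v hv => (Set.disjoint_left.1 hST) hv
  have hTnS : ∀ v, v ∈ T → v ∉ S := fun v hv hv' => hSnT v hv' hv
  -- Hall condition for the main matching
  have hhall : ∀ X : Finset {l : V × Fin 2 // l ∈ L},
      X.card ≤ (X.biUnion (fun l => (nb l.1.1) ×ˢ (Finset.univ : Finset (Fin 2)))).card := by
    intro X
    set Y : Finset V := X.image (fun l => l.1.1) with hY
    have hYT : ∀ y ∈ Y, y ∈ T := by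
      intro y hy
      obtain ⟨l, hl, rfl⟩ := Finset.mem_image.1 hy
      exact hLT _ l.2
    have hbi : X.biUnion (fun l => (nb l.1.1) ×ˢ (Finset.univ : Finset (Fin 2)))
        = (Y.biUnion nb) ×ˢ (Finset.univ : Finset (Fin 2)) := by
      ext ⟨v, k⟩
      constructor
      · intro h
        obtain ⟨l, hl, hvk⟩ := Finset.mem_biUnion.1 h
        rw [Finset.mem_product] at hvk
        exact Finset.mem_product.2 ⟨Finset.mem_biUnion.2
          ⟨l.1.1, Finset.mem_image.2 ⟨l, hl, rfl⟩, hvk.1⟩, Finset.mem_univ _⟩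
      · intro h
        rw [Finset.mem_product] at h
        obtain ⟨y, hy, hv⟩ := Finset.mem_biUnion.1 h.1
        obtain ⟨l, hl, rfl⟩ := Finset.mem_image.1 hy
        exact Finset.mem_biUnion.2 ⟨l, hl, Finset.mem_product.2 ⟨hv, Finset.mem_univ _⟩⟩
    rw [hbi, Finset.card_product, Finset.card_univ, Fintype.card_fin]
    -- bound X.card
    set Y₁ : Finset V := Y.filter (· ∈ T₁) with hY₁
    set Y₂ : Finset V := Y.filter (· ∈ T₂) with hY₂
    have hXcard : X.card ≤ 2 * Y₁.card + Y₂.card := by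
      have himg : X.card = (X.image (fun l => l.1)).card :=
        (Finset.card_image_of_injective _ Subtype.val_injective).symm
      have hsub : X.image (fun l => l.1) ⊆ (Y₁ ×ˢ (Finset.univ : Finset (Fin 2)))
          ∪ (Y₂ ×ˢ ({0} : Finset (Fin 2))) := by
        intro l hl
        obtain ⟨x, hx, rfl⟩ := Finset.mem_image.1 hl
        have hxL := x.2
        have hxY : x.1.1 ∈ Y := Finset.mem_image.2 ⟨x, hx, rfl⟩
        rcases (hL x.1).1 hxL with h | h
        · exact Finset.mem_union_left _ (Finset.mem_product.2
            ⟨Finset.mem_filter.2 ⟨hxY, h⟩, Finset.mem_univ _⟩)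
        · exact Finset.mem_union_right _ (Finset.mem_product.2
            ⟨Finset.mem_filter.2 ⟨hxY, h.1⟩, by simp [h.2]⟩)
      calc X.card = (X.image (fun l => l.1)).card := himg
        _ ≤ _ := Finset.card_le_card hsub
        _ ≤ (Y₁ ×ˢ (Finset.univ : Finset (Fin 2))).card
            + (Y₂ ×ˢ ({0} : Finset (Fin 2))).card := Finset.card_union_le _ _
        _ = 2 * Y₁.card + Y₂.card := by
            rw [Finset.card_product, Finset.card_product]
            simp [mul_comm]
    -- the neighbourhood condition
    have hq := hN (↑Y) (by intro y hy; exact hYT y hy)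
    have e₁ : (↑Y ∩ T₁ : Set V) = ↑Y₁ := by ext v; simp [hY₁, and_comm]
    have e₂ : (↑Y ∩ T₂ : Set V) = ↑Y₂ := by ext v; simp [hY₂, and_comm]
    have e₃ : nbhdSet H (↑Y) = ↑(Y.biUnion nb) := by
      ext v
      simp only [nbhdSet, Set.mem_setOf_eq, Finset.coe_biUnion, Set.mem_iUnion,
        Finset.mem_coe, mem_nb]
      constructor
      · rintro ⟨-, u, hu, hadj⟩; exact ⟨u, hu, hadj⟩
      · rintro ⟨u, hu, hadj⟩
        refine ⟨?_, u, hu, hadj⟩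
        rcases hbip u v hadj with ⟨huS, -⟩ | ⟨-, hvS⟩
        · exact absurd huS (hTnS u (hYT u hu))
        · intro hvY; exact hSnT v hvS (hYT v hvY)
    rw [e₁, e₂, e₃, Set.ncard_coe_finset, Set.ncard_coe_finset, Set.ncard_coe_finset] at hq
    have : 2 * Y₁.card + Y₂.card ≤ (Y.biUnion nb).card * 2 := by
      have h2 : (2 * Y₁.card + Y₂.card : ℚ) ≤ (Y.biUnion nb).card * 2 := by linarith
      exact_mod_cast h2
    omega
  obtain ⟨f₀, hf₀inj, hf₀mem⟩ :=
    (Finset.all_card_le_biUnion_card_iff_exists_injective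
      (fun l : {l : V × Fin 2 // l ∈ L} => (nb l.1.1) ×ˢ (Finset.univ : Finset (Fin 2)))).1 hhall
  set f : V × Fin 2 → V × Fin 2 := fun l => if h : l ∈ L then f₀ ⟨l, h⟩ else l with hf
  have hfinj : ∀ l ∈ L, ∀ l' ∈ L, f l = f l' → l = l' := by
    intro l hl l' hl' h
    simp only [hf, dif_pos hl, dif_pos hl'] at h
    exact congrArg Subtype.val (hf₀inj h)
  have hfadj : ∀ l ∈ L, H.Adj l.1 (f l).1 := by
    intro l hl
    have := hf₀mem ⟨l, hl⟩
    rw [Finset.mem_product] at this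
    have h1 := (mem_nb _ _).1 this.1
    simpa [hf, dif_pos hl] using h1
  have hfS : ∀ l ∈ L, (f l).1 ∈ S := by
    intro l hl
    rcases hbip _ _ (hfadj l hl) with ⟨h1, -⟩ | ⟨-, h2⟩
    · exact absurd h1 (hTnS _ (hLT l hl))
    · exact h2
  -- `fin2`: the two elements of `Fin 2`
  have fin2 : ∀ (a b : Fin 2), a = b ∨ a = ⟨1 - (b : ℕ), by omega⟩ := by
    intro a b
    have ha := a.isLt; have hb := b.isLt
    by_cases h : (a : ℕ) = (b : ℕ)
    · exact Or.inl (Fin.ext h)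
    · right; apply Fin.ext; show (a : ℕ) = 1 - (b : ℕ); omega
  have fin2ne : ∀ (a : Fin 2), (⟨1 - (a : ℕ), by omega⟩ : Fin 2) ≠ a := by
    intro a h
    have := congrArg Fin.val h
    have ha := a.isLt
    simp at this; omega
  -- The path-following construction.
  have WALK : ∀ N : ℕ, ∀ avail : Finset (V × Fin 2), avail.card ≤ N →
      ∀ (s : V) (j : Fin 2), s ∈ S → avail ⊆ L →
      (∀ (t : V) (i i' : Fin 2), (t, i) ∈ avail → (t, i') ∈ L → (t, i') ∈ avail) →
      (∀ l ∈ avail, f l ≠ (s, j)) →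
      ∃ w : List V, TailSpec S T₁ T₂ w ∧ w.head? = some s ∧ w.Chain' H.Adj ∧ w.Nodup ∧
        (∀ v ∈ w, v = s ∨ (∃ i, (v, i) ∈ avail) ∨ (∃ l ∈ avail, (f l).1 = v)) ∧
        (∀ l ∈ avail, (f l).1 ∈ w → l.1 ∈ w) := by
    intro N
    induction N with
    | zero =>
      intro avail hcard s j hs havL hclo h2
      have : avail = ∅ := Finset.card_eq_zero.1 (Nat.le_zero.1 hcard)
      subst this
      refine ⟨[s], TailSpec.single s hs, rfl, List.isChain_singleton s, List.nodup_singleton s,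
        ?_, ?_⟩
      · intro v hv; left; simpa using hv
      · intro l hl; simp at hl
    | succ N ih =>
      intro avail hcard s j hs havL hclo h2
      by_cases hex : ∃ l ∈ avail, f l = (s, ⟨1 - (j : ℕ), by omega⟩)
      · obtain ⟨⟨t, i⟩, hmem, hfl⟩ := hex
        have htL : (t, i) ∈ L := havL hmem
        have htT : t ∈ T := hLT _ htL
        have hts : t ≠ s := fun h => hTnS t htT (h ▸ hs)
        have hadj_ts : H.Adj s t := by
          have := hfadj _ htL
          rw [hfl] at this
          exact this.symm
        by_cases ht2 : t ∈ T₂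
        · -- the walk ends here, at a `T₂`-vertex
          refine ⟨[s, t], TailSpec.pair s t hs ht2, rfl, ?_, ?_, ?_, ?_⟩
          · exact List.isChain_pair.2 hadj_ts
          · simp [Ne.symm hts]
          · intro v hv
            rcases List.mem_cons.1 hv with rfl | hv
            · exact Or.inl rfl
            · rcases List.mem_cons.1 hv with rfl | hv
              · exact Or.inr (Or.inl ⟨i, hmem⟩)
              · cases hv
          · intro l hl hfw
            rcases List.mem_cons.1 hfw with hfs | hfw
            · -- (f l).1 = s
              rcases fin2 (f l).2 j with hj | hj
              · exact absurd (Prod.ext hfs hj) (h2 l hl)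
              · have : f l = f (t, i) := by rw [hfl]; exact Prod.ext hfs hj
                have := hfinj l (havL hl) _ htL this
                rw [this]; simp
            · rcases List.mem_cons.1 hfw with hft | hfw
              · exact absurd (hfS l (havL hl)) (fun h => hTnS t htT (hft ▸ h))
              · cases hfw
        · -- t ∈ T₁ : continue the walk
          have ht1 : t ∈ T₁ := by
            rw [← hT12T] at htT
            exact htT.resolve_right ht2
          set ii : Fin 2 := ⟨1 - (i : ℕ), by omega⟩ with hii
          have hl2L : (t, ii) ∈ L := (hL _).2 (Or.inl ht1)
          have hl2av : (t, ii) ∈ avail := hclo t i ii hmem hl2L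
          obtain ⟨s', j', hfl2⟩ : ∃ s' j', f (t, ii) = (s', j') := ⟨_, _, rfl⟩
          have hs'S : s' ∈ S := by
            have := hfS _ hl2L; rw [hfl2] at this; exact this
          set avail' := (avail.erase (t, i)).erase (t, ii) with havail'
          have hsub' : avail' ⊆ avail :=
            (Finset.erase_subset _ _).trans (Finset.erase_subset _ _)
          have hnotmem : ∀ (k : Fin 2), (t, k) ∉ avail' := by
            intro k hk
            rcases fin2 k i with rfl | rfl
            · exact (Finset.mem_erase.1 (Finset.mem_of_mem_erase hk)).1 rfl
            · exact (Finset.mem_erase.1 hk).1 rfl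
          have hcard' : avail'.card ≤ N := by
            have h1 : (avail.erase (t, i)).card < avail.card :=
              Finset.card_erase_lt_of_mem hmem
            have h2' : avail'.card ≤ (avail.erase (t, i)).card := Finset.card_erase_le
            omega
          have hii_ne : ii ≠ i := fin2ne i
          obtain ⟨w', hts', hhead', hchain', hnd', hP', hB'⟩ :=
            ih avail' hcard' s' j' hs'S (hsub'.trans havL)
              (by
                intro t'' i'' i''' h1 h2''
                have h1' : (t'', i'') ∈ avail := hsub' h1
                have h3 := hclo t'' i'' i''' h1' h2''
                have htne : t'' ≠ t := by
                  rintro rfl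
                  exact hnotmem i'' h1
                rw [havail']
                rw [Finset.mem_erase, Finset.mem_erase]
                exact ⟨by simp [htne], by simp [htne], h3⟩)
              (by
                intro l hl hfeq
                have : l = (t, ii) := hfinj l (havL (hsub' hl)) _ hl2L (by rw [hfeq, hfl2])
                rw [this] at hl
                exact hnotmem ii hl)
          -- facts about s and s'
          have hss' : s' ≠ s := by
            intro h
            rcases fin2 j' j with hj | hj
            · exact h2 _ hl2av (by rw [hfl2, h, hj])
            · have heq : f (t, ii) = f (t, i) := by
                rw [hfl2, hfl, h, hj]
              exact hii_ne (congrArg Prod.snd (hfinj _ (havL hl2av) _ htL heq))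
          have hadj_ts' : H.Adj t s' := by
            have := hfadj _ hl2L; rw [hfl2] at this; exact this
          -- t does not appear in w'
          have htw' : t ∉ w' := by
            intro hmem'
            rcases hP' t hmem' with rfl | ⟨i'', hi''⟩ | ⟨l, hl, hfl'⟩
            · exact hTnS _ htT hs'S
            · exact hnotmem i'' hi''
            · exact hTnS t htT (hfl' ▸ hfS l (havL (hsub' hl)))
          -- s does not appear in w'
          have hsw' : s ∉ w' := by
            intro hmem'
            rcases hP' s hmem' with h | ⟨i'', hi''⟩ | ⟨l, hl, hfl'⟩
            · exact hss' h.symm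
            · exact hTnS s (hLT _ (havL (hsub' hi''))) hs
            · rcases fin2 (f l).2 j with hj | hj
              · exact h2 l (hsub' hl) (Prod.ext hfl' hj)
              · have : f l = f (t, i) := by rw [hfl]; exact Prod.ext hfl' hj
                have := hfinj l (havL (hsub' hl)) _ htL this
                rw [this] at hl
                exact hnotmem i hl
          refine ⟨s :: t :: w', TailSpec.cons s t w' hs ht1 hts', rfl, ?_, ?_, ?_, ?_⟩
          · -- Chain'
            refine List.isChain_cons.2 ⟨?_, List.isChain_cons.2 ⟨?_, hchain'⟩⟩
            · intro y hy
              rw [List.head?_cons] at hy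
              cases hy
              exact hadj_ts
            · intro y hy
              rw [hhead'] at hy
              cases hy
              exact hadj_ts'
          · -- Nodup
            refine List.nodup_cons.2 ⟨?_, List.nodup_cons.2 ⟨htw', hnd'⟩⟩
            intro hmem'
            rcases List.mem_cons.1 hmem' with h | h
            · exact hts h.symm
            · exact hsw' h
          · -- P
            intro v hv
            rcases List.mem_cons.1 hv with rfl | hv
            · exact Or.inl rfl
            rcases List.mem_cons.1 hv with rfl | hv
            · exact Or.inr (Or.inl ⟨i, hmem⟩)
            rcases hP' v hv with rfl | ⟨i'', hi''⟩ | ⟨l, hl, hfl'⟩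
            · exact Or.inr (Or.inr ⟨(t, ii), hl2av, by rw [hfl2]⟩)
            · exact Or.inr (Or.inl ⟨i'', hsub' hi''⟩)
            · exact Or.inr (Or.inr ⟨l, hsub' hl, hfl'⟩)
          · -- B
            intro l hl hfw
            rcases List.mem_cons.1 hfw with hfs | hfw
            · rcases fin2 (f l).2 j with hj | hj
              · exact absurd (Prod.ext hfs hj) (h2 l hl)
              · have : f l = f (t, i) := by rw [hfl]; exact Prod.ext hfs hj
                have := hfinj l (havL hl) _ htL this
                rw [this]; simp
            rcases List.mem_cons.1 hfw with hft | hfw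
            · exact absurd (hfS l (havL hl)) (fun h => hTnS t htT (hft ▸ h))
            by_cases hl' : l ∈ avail'
            · have := hB' l hl' hfw
              simp [this]
            · have : l = (t, i) ∨ l = (t, ii) := by
                rw [havail'] at hl'
                rw [Finset.mem_erase, Finset.mem_erase] at hl'
                push_neg at hl'
                by_cases h : l = (t, ii)
                · exact Or.inr h
                · by_cases h' : l = (t, i)
                  · exact Or.inl h'
                  · exact absurd hl (hl' h h')
              rcases this with rfl | rfl <;> simp
      · -- no continuation : the walk is just [s]
        push_neg at hex
        refine ⟨[s], TailSpec.single s hs, rfl, List.isChain_singleton s, List.nodup_singleton s,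
          ?_, ?_⟩
        · intro v hv; left; simpa using hv
        · intro l hl hfw
          have hfs : (f l).1 = s := by simpa using hfw
          rcases fin2 (f l).2 j with hj | hj
          · exact absurd (Prod.ext hfs hj) (h2 l hl)
          · exact absurd (Prod.ext hfs hj) (hex l hl)
  -- iterate the walk construction over all of T₂
  have ROUNDS : ∀ N : ℕ, ∀ (rem : Finset V) (avail : Finset (V × Fin 2)), rem.card ≤ N →
      avail ⊆ L →
      (∀ (t : V) (i i' : Fin 2), (t, i) ∈ avail → (t, i') ∈ L → (t, i') ∈ avail) →
      (∀ t ∈ rem, t ∈ T₂ ∧ (t, (0 : Fin 2)) ∈ avail) →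
      ∃ ps : List (List V),
        (∀ p ∈ ps, ∃ t₂ w, p = t₂ :: w ∧ t₂ ∈ T₂ ∧ TailSpec S T₁ T₂ w ∧
          p.Chain' H.Adj ∧ p.Nodup) ∧
        (∀ p ∈ ps, ∀ p' ∈ ps, ∀ v, v ∈ p → v ∈ p' → p = p') ∧
        (∀ t ∈ rem, ∃ p ∈ ps, t ∈ p) ∧
        (∀ l ∈ avail, (∀ p ∈ ps, l.1 ∉ p) → ∀ p ∈ ps, (f l).1 ∉ p) ∧
        (∀ p ∈ ps, ∀ v ∈ p, (∃ i, (v, i) ∈ avail) ∨ (∃ l ∈ avail, (f l).1 = v)) := by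
    intro N
    induction N with
    | zero =>
      intro rem avail hcard havL hclo hrem
      have : rem = ∅ := Finset.card_eq_zero.1 (Nat.le_zero.1 hcard)
      subst this
      exact ⟨[], by simp, by simp, by simp, by simp, by simp⟩
    | succ N ih =>
      intro rem avail hcard havL hclo hrem
      rcases Finset.eq_empty_or_nonempty rem with rfl | ⟨t₂, ht₂⟩
      · exact ⟨[], by simp, by simp, by simp, by simp, by simp⟩
      obtain ⟨ht₂T₂, ht₂av⟩ := hrem t₂ ht₂
      have ht₂T : t₂ ∈ T := hT2 ht₂T₂
      set avail₁ := avail.erase (t₂, (0 : Fin 2)) with havail₁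
      have hsub₁ : avail₁ ⊆ avail := Finset.erase_subset _ _
      have ht₂n1 : t₂ ∉ T₁ := fun h => Set.disjoint_left.1 hT12 h ht₂T₂
      have hLT₂ : ∀ i : Fin 2, (t₂, i) ∈ L → i = 0 := by
        intro i hi
        rcases (hL _).1 hi with h | h
        · exact absurd h ht₂n1
        · exact h.2
      obtain ⟨s₀, j₀, hft₂⟩ : ∃ s' j', f (t₂, (0 : Fin 2)) = (s', j') := ⟨_, _, rfl⟩
      have ht₂L : (t₂, (0 : Fin 2)) ∈ L := havL ht₂av
      have hs₀S : s₀ ∈ S := by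
        have := hfS _ ht₂L; rw [hft₂] at this; exact this
      obtain ⟨w, htsw, hheadw, hchainw, hndw, hPw, hBw⟩ :=
        WALK avail₁.card avail₁ le_rfl s₀ j₀ hs₀S (hsub₁.trans havL)
          (by
            intro t'' i'' i''' h1 h2''
            have h1' : (t'', i'') ∈ avail := hsub₁ h1
            have h3 := hclo t'' i'' i''' h1' h2''
            rw [havail₁, Finset.mem_erase]
            refine ⟨?_, h3⟩
            rintro heq
            have : t'' = t₂ := congrArg Prod.fst heq
            subst this
            have := hLT₂ i'' (havL h1')
            subst this
            exact (Finset.mem_erase.1 h1).1 rfl)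
          (by
            intro l hl hfeq
            have : l = (t₂, (0 : Fin 2)) :=
              hfinj l (havL (hsub₁ hl)) _ ht₂L (by rw [hfeq, hft₂])
            rw [this] at hl
            exact (Finset.mem_erase.1 hl).1 rfl)
      set p : List V := t₂ :: w with hp
      have ht₂p : t₂ ∈ p := List.mem_cons_self
      -- t₂ does not occur in w
      have ht₂w : t₂ ∉ w := by
        intro hmem'
        rcases hPw t₂ hmem' with h | ⟨i'', hi''⟩ | ⟨l, hl, hfl'⟩
        · exact hTnS t₂ ht₂T (h ▸ hs₀S)
        · have hi''L := havL (hsub₁ hi'')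
          have := hLT₂ i'' hi''L
          subst this
          exact (Finset.mem_erase.1 hi'').1 rfl
        · exact hTnS t₂ ht₂T (hfl' ▸ hfS l (havL (hsub₁ hl)))
      have hndp : p.Nodup := List.nodup_cons.2 ⟨ht₂w, hndw⟩
      have hchainp : p.Chain' H.Adj := by
        refine List.isChain_cons.2 ⟨?_, hchainw⟩
        intro y hy
        rw [hheadw] at hy
        cases hy
        have := hfadj _ ht₂L
        rw [hft₂] at this
        exact this
      -- every available left-vertex outside p has image outside p
      have hW6x : ∀ l ∈ avail, l.1 ∉ p → (f l).1 ∉ p := by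
        intro l hl hlp hfp
        have hl1 : l ∈ avail₁ := by
          rw [havail₁, Finset.mem_erase]
          exact ⟨fun h => hlp (h ▸ ht₂p), hl⟩
        rcases List.mem_cons.1 hfp with h | h
        · exact hTnS t₂ ht₂T (h ▸ hfS l (havL hl))
        · exact hlp (List.mem_cons.2 (Or.inr (hBw l hl1 h)))
      set rem' := rem.filter (fun t => t ∉ p) with hrem'
      set avail'' := avail.filter (fun l => l.1 ∉ p) with havail''
      have hsub'' : avail'' ⊆ avail := Finset.filter_subset _ _
      have hcard' : rem'.card ≤ N := by
        have : rem'.card < rem.card := by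
          refine Finset.card_lt_card ⟨Finset.filter_subset _ _, ?_⟩
          intro hsup
          have := Finset.mem_filter.1 (hsup ht₂)
          exact this.2 ht₂p
        omega
      obtain ⟨ps', hR1', hR2', hR3', hR4', hR5'⟩ :=
        ih rem' avail'' hcard' (hsub''.trans havL)
          (by
            intro t'' i'' i''' h1 h2''
            have h1' := Finset.mem_filter.1 h1
            exact Finset.mem_filter.2 ⟨hclo t'' i'' i''' h1'.1 h2'', h1'.2⟩)
          (by
            intro t ht
            have ht' := Finset.mem_filter.1 ht
            obtain ⟨h1, h2⟩ := hrem t ht'.1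
            exact ⟨h1, Finset.mem_filter.2 ⟨h2, ht'.2⟩⟩)
      -- vertices of later paths are disjoint from p
      have hdisj : ∀ p' ∈ ps', ∀ v, v ∈ p' → v ∉ p := by
        intro p' hp' v hv hvp
        rcases hR5' p' hp' v hv with ⟨i'', hi''⟩ | ⟨l, hl, hfl'⟩
        · exact (Finset.mem_filter.1 hi'').2 hvp
        · have hl' := Finset.mem_filter.1 hl
          exact hW6x l hl'.1 hl'.2 (hfl' ▸ hvp)
      refine ⟨p :: ps', ?_, ?_, ?_, ?_, ?_⟩
      · intro q hq
        rcases List.mem_cons.1 hq with rfl | hq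
        · exact ⟨t₂, w, rfl, ht₂T₂, htsw, hchainp, hndp⟩
        · exact hR1' q hq
      · intro q hq q' hq' v hv hv'
        rcases List.mem_cons.1 hq with rfl | hq <;> rcases List.mem_cons.1 hq' with h' | h'
        · rw [h']
        · exact absurd hv (fun h => hdisj q' h' v hv' h)
        · rw [h'] at hv'
          exact absurd hv' (fun h => hdisj q hq v hv h)
        · exact hR2' q hq q' h' v hv hv'
      · intro t ht
        by_cases htp : t ∈ p
        · exact ⟨p, List.mem_cons_self, htp⟩
        · obtain ⟨q, hq, hq'⟩ := hR3' t (Finset.mem_filter.2 ⟨ht, htp⟩)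
          exact ⟨q, List.mem_cons.2 (Or.inr hq), hq'⟩
      · intro l hl hnot q hq
        have hlp : l.1 ∉ p := hnot p (List.mem_cons_self)
        have hl'' : l ∈ avail'' := Finset.mem_filter.2 ⟨hl, hlp⟩
        rcases List.mem_cons.1 hq with rfl | hq
        · exact hW6x l hl hlp
        · exact hR4' l hl'' (fun q' hq' => hnot q' (List.mem_cons.2 (Or.inr hq'))) q hq
      · intro q hq v hv
        rcases List.mem_cons.1 hq with rfl | hq
        · rcases List.mem_cons.1 hv with rfl | hv
          · exact Or.inl ⟨0, ht₂av⟩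
          · rcases hPw v hv with rfl | ⟨i'', hi''⟩ | ⟨l, hl, hfl'⟩
            · exact Or.inr ⟨(t₂, 0), ht₂av, by rw [hft₂]⟩
            · exact Or.inl ⟨i'', hsub₁ hi''⟩
            · exact Or.inr ⟨l, hsub₁ hl, hfl'⟩
        · rcases hR5' q hq v hv with ⟨i'', hi''⟩ | ⟨l, hl, hfl'⟩
          · exact Or.inl ⟨i'', hsub'' hi''⟩
          · exact Or.inr ⟨l, hsub'' hl, hfl'⟩
  -- run the rounds over all of T₂
  set T₂f : Finset V := Finset.univ.filter (· ∈ T₂) with hT₂f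
  obtain ⟨ps, hR1, hR2, hR3, hR4, hR5⟩ :=
    ROUNDS T₂f.card T₂f L le_rfl (fun _ h => h) (fun t i i' _ h => h)
      (by
        intro t ht
        have ht2 : t ∈ T₂ := (Finset.mem_filter.1 ht).2
        exact ⟨ht2, (hL _).2 (Or.inr ⟨ht2, rfl⟩)⟩)
  -- leftover T₁ vertices
  set T1left : Finset V := Finset.univ.filter (fun t => t ∈ T₁ ∧ ∀ p ∈ ps, t ∉ p) with hT1left
  have hT1left_mem : ∀ t, t ∈ T1left ↔ (t ∈ T₁ ∧ ∀ p ∈ ps, t ∉ p) := by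
    intro t; simp [hT1left]
  have hT1leftL : ∀ t ∈ T1left, ∀ i : Fin 2, (t, i) ∈ L :=
    fun t ht i => (hL _).2 (Or.inl ((hT1left_mem t).1 ht).1)
  have hhall2 : ∀ X : Finset {t : V // t ∈ T1left},
      X.card ≤ (X.biUnion (fun t => ({(f (t.1, 0)).1, (f (t.1, 1)).1} : Finset V))).card := by
    intro X
    set B := X.biUnion (fun t => ({(f (t.1, 0)).1, (f (t.1, 1)).1} : Finset V)) with hB
    have key : (X ×ˢ (Finset.univ : Finset (Fin 2))).card ≤
        (B ×ˢ (Finset.univ : Finset (Fin 2))).card := by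
      refine Finset.card_le_card_of_injOn (fun q => f (q.1.1, q.2)) ?_ ?_
      · rintro ⟨x, i⟩ hq
        have hx : x ∈ X := (Finset.mem_product.1 hq).1
        refine Finset.mem_product.2 ⟨?_, Finset.mem_univ _⟩
        refine Finset.mem_biUnion.2 ⟨x, hx, ?_⟩
        have : i = 0 ∨ i = 1 := by
          have := i.isLt
          by_cases h : (i : ℕ) = 0
          · exact Or.inl (Fin.ext h)
          · exact Or.inr (Fin.ext (by omega))
        rcases this with rfl | rfl
        · exact Finset.mem_insert_self _ _
        · exact Finset.mem_insert.2 (Or.inr (Finset.mem_singleton_self _))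
      · rintro ⟨x, i⟩ hq ⟨x', i'⟩ hq' heq
        have h1 : (x.1, i) ∈ L := hT1leftL _ x.2 i
        have h2 : (x'.1, i') ∈ L := hT1leftL _ x'.2 i'
        have := hfinj _ h1 _ h2 heq
        have hx : x.1 = x'.1 := congrArg Prod.fst this
        have hi : i = i' := congrArg Prod.snd this
        exact Prod.ext (Subtype.ext hx) hi
    rw [Finset.card_product, Finset.card_product, Finset.card_univ, Fintype.card_fin] at key
    omega
  obtain ⟨g₀, hg₀inj, hg₀mem⟩ :=
    (Finset.all_card_le_biUnion_card_iff_exists_injective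
      (fun t : {t : V // t ∈ T1left} => ({(f (t.1, 0)).1, (f (t.1, 1)).1} : Finset V))).1 hhall2
  set g' : V → V := fun t => if h : t ∈ T1left then g₀ ⟨t, h⟩ else t with hg'
  have hg'ex : ∀ t (h : t ∈ T1left), ∃ i : Fin 2, g' t = (f (t, i)).1 := by
    intro t h
    have := hg₀mem ⟨t, h⟩
    rcases Finset.mem_insert.1 this with h' | h'
    · exact ⟨0, by simp only [hg']; rw [dif_pos h]; exact h'⟩
    · exact ⟨1, by simp only [hg']; rw [dif_pos h]; exact Finset.mem_singleton.1 h'⟩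
  have hg'S : ∀ t ∈ T1left, g' t ∈ S := by
    intro t ht
    obtain ⟨i, hi⟩ := hg'ex t ht
    rw [hi]; exact hfS _ (hT1leftL t ht i)
  have hg'adj : ∀ t ∈ T1left, H.Adj t (g' t) := by
    intro t ht
    obtain ⟨i, hi⟩ := hg'ex t ht
    rw [hi]; exact hfadj _ (hT1leftL t ht i)
  have hg'notps : ∀ t ∈ T1left, ∀ p ∈ ps, g' t ∉ p := by
    intro t ht p hp
    obtain ⟨i, hi⟩ := hg'ex t ht
    rw [hi]
    exact hR4 (t, i) (hT1leftL t ht i) (fun q hq => ((hT1left_mem t).1 ht).2 q hq) p hp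
  have hg'inj : ∀ t ∈ T1left, ∀ t' ∈ T1left, g' t = g' t' → t = t' := by
    intro t ht t' ht' h
    simp only [hg'] at h
    rw [dif_pos ht, dif_pos ht'] at h
    exact congrArg Subtype.val (hg₀inj h)
  -- T₁ vertices in the paths, T₂ vertices in the paths
  -- the final list of blocks
  set allB : List (List V) :=
    (ps.flatMap fun p => if Even p.length then pairs p else [p])
      ++ (T1left.toList.map fun t => [t, g' t]) with hallB
  have hmem_allB : ∀ b, b ∈ allB ↔
      ((∃ p ∈ ps, (Even p.length ∧ b ∈ pairs p) ∨ (¬Even p.length ∧ b = p)) ∨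
        ∃ t ∈ T1left, b = [t, g' t]) := by
    intro b
    rw [hallB, List.mem_append, List.mem_flatMap]
    constructor
    · rintro (⟨p, hp, hb⟩ | hb)
      · by_cases he : Even p.length
        · rw [if_pos he] at hb
          exact Or.inl ⟨p, hp, Or.inl ⟨he, hb⟩⟩
        · rw [if_neg he] at hb
          have : b = p := by simpa using hb
          exact Or.inl ⟨p, hp, Or.inr ⟨he, this⟩⟩
      · obtain ⟨t, ht, rfl⟩ := List.mem_map.1 hb
        exact Or.inr ⟨t, Finset.mem_toList.1 ht, rfl⟩
    · rintro (⟨p, hp, ⟨he, hb⟩ | ⟨he, rfl⟩⟩ | ⟨t, ht, rfl⟩)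
      · exact Or.inl ⟨p, hp, by rw [if_pos he]; exact hb⟩
      · exact Or.inl ⟨b, hp, by rw [if_neg he]; simp⟩
      · exact Or.inr (List.mem_map.2 ⟨t, Finset.mem_toList.2 ht, rfl⟩)
  -- properties of TailSpec tails
  have ts2 : ∀ w : List V, TailSpec S T₁ T₂ w → ∀ (h : w ≠ []),
      (w.getLast h ∈ T₂ ↔ Even w.length) := by
    intro w hw
    induction hw with
    | single s hs =>
      intro h
      constructor
      · intro h'
        exact absurd (by simpa using h') (fun hh => hSnT s hs (hT2 hh))
      · intro h'; simp at h'
    | pair s t hs ht =>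
      intro h
      constructor
      · intro; exact ⟨1, rfl⟩
      · intro
        show List.getLast [s, t] h ∈ T₂
        simpa using ht
    | cons s t rest hs ht hrec ih =>
      intro h
      have hne : rest ≠ [] := hrec.ne_nil
      have h1 : (s :: t :: rest).getLast h = rest.getLast hne := by
        rw [List.getLast_cons (by simp [hne]), List.getLast_cons hne]
      rw [h1]
      rw [ih hne]
      show Even rest.length ↔ Even (rest.length + 1 + 1)
      rw [Nat.even_iff, Nat.even_iff]
      omega
  have ts1 : ∀ w : List V, TailSpec S T₁ T₂ w → ∀ x ∈ w, x ∈ T₂ → ∀ (h : w ≠ []),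
      x = w.getLast h := by
    intro w hw
    induction hw with
    | single s hs =>
      intro x hx hx2 h
      have : x = s := by simpa using hx
      subst this
      exact absurd hx2 (fun hh => hSnT x hs (hT2 hh))
    | pair s t hs ht =>
      intro x hx hx2 h
      rcases List.mem_cons.1 hx with rfl | hx
      · exact absurd hx2 (fun hh => hSnT x hs (hT2 hh))
      · have : x = t := by simpa using hx
        subst this
        simp
    | cons s t rest hs ht hrec ih =>
      intro x hx hx2 h
      have hne : rest ≠ [] := hrec.ne_nil
      have h1 : (s :: t :: rest).getLast h = rest.getLast hne := by
        rw [List.getLast_cons (by simp [hne]), List.getLast_cons hne]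
      rw [h1]
      rcases List.mem_cons.1 hx with rfl | hx
      · exact absurd hx2 (fun hh => hSnT x hs (hT2 hh))
      rcases List.mem_cons.1 hx with rfl | hx
      · exact absurd hx2 (fun hh => Set.disjoint_left.1 hT12 ht hh)
      · exact ih x hx hx2 hne
  -- odd blocks have their `T₂`-vertices exactly at the two ends
  have hEnd : ∀ p ∈ ps, ¬Even p.length → ∀ x ∈ p,
      (x ∈ T₂ ↔ (p.idxOf x = 0 ∨ p.idxOf x = p.length - 1)) := by
    intro p hp hodd x hx
    obtain ⟨t₂, w, hpw, ht₂, hts, hchain, hnd⟩ := hR1 p hp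
    subst hpw
    have hwne : w ≠ [] := hts.ne_nil
    have hevenw : Even w.length := by
      rw [Nat.even_iff]
      rw [List.length_cons, Nat.even_iff] at hodd
      omega
    have hpne : (t₂ :: w) ≠ [] := by simp
    have hgl : (t₂ :: w).getLast hpne = w.getLast hwne := List.getLast_cons hwne
    have hlastT₂ : (t₂ :: w).getLast hpne ∈ T₂ := by
      rw [hgl]
      exact (ts2 w hts hwne).2 hevenw
    have hlenpos : 0 < (t₂ :: w).length := by simp
    have hlast_eq : (t₂ :: w).getLast hpne = (t₂ :: w)[(t₂ :: w).length - 1]'(by omega) :=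
      List.getLast_eq_getElem hpne
    have hlast_idx : (t₂ :: w).idxOf ((t₂ :: w).getLast hpne) = (t₂ :: w).length - 1 := by
      rw [hlast_eq]
      exact List.Nodup.idxOf_getElem hnd _ _
    constructor
    · intro hx2
      rcases List.mem_cons.1 hx with rfl | hxw
      · left; simp
      · right
        have := ts1 w hts x hxw hx2 hwne
        rw [← hgl] at this
        rw [this, hlast_idx]
    · intro hidx
      have hxlt : (t₂ :: w).idxOf x < (t₂ :: w).length := List.idxOf_lt_length_iff.2 hx
      have h2 : (t₂ :: w)[(t₂ :: w).idxOf x]? = some x := by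
        rw [List.getElem?_eq_getElem hxlt, List.getElem_idxOf]
      rcases hidx with h0 | h1
      · rw [h0] at h2
        have : t₂ = x := by simpa using h2
        rw [← this]; exact ht₂
      · rw [h1] at h2
        have h3 : (t₂ :: w)[(t₂ :: w).length - 1]? =
            some ((t₂ :: w).getLast hpne) := by
          rw [List.getElem?_eq_getElem (by omega), ← hlast_eq]
        rw [h2] at h3
        have : (t₂ :: w).getLast hpne = x := by simpa using h3.symm
        rw [← this]; exact hlastT₂
  -- properties of the blocks
  have hBchain : ∀ b ∈ allB, b.Chain' H.Adj := by
    intro b hb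
    rcases (hmem_allB b).1 hb with ⟨p, hp, ⟨he, hbp⟩ | ⟨he, rfl⟩⟩ | ⟨t, ht, rfl⟩
    · obtain ⟨a, a', rfl, hcc⟩ := pairs_shape hbp
      obtain ⟨-, -, -, hchain, -⟩ := hR1 p hp
      obtain ⟨t₂, w, hpw, -, -, hchainp, -⟩ := hR1 p hp
      exact List.isChain_pair.2 (consec_rel hchainp hcc)
    · obtain ⟨t₂, w, hpw, -, -, hchainp, -⟩ := hR1 b hp
      exact hchainp
    · exact List.isChain_pair.2 (hg'adj t ht)
  have hBnodup : ∀ b ∈ allB, b.Nodup := by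
    intro b hb
    rcases (hmem_allB b).1 hb with ⟨p, hp, ⟨he, hbp⟩ | ⟨he, rfl⟩⟩ | ⟨t, ht, rfl⟩
    · obtain ⟨a, a', rfl, hcc⟩ := pairs_shape hbp
      obtain ⟨t₂, w, hpw, -, -, -, hndp⟩ := hR1 p hp
      have := consec_indexOf hndp hcc
      have hne : a ≠ a' := by
        intro h; rw [h] at this; omega
      simp [hne]
    · obtain ⟨t₂, w, hpw, -, -, -, hndp⟩ := hR1 b hp
      exact hndp
    · have hgS := hg'S t ht
      have htT : t ∈ T := hT1 ((hT1left_mem t).1 ht).1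
      have hne : t ≠ g' t := fun h => hSnT _ hgS (h ▸ htT)
      simp [hne]
  have hBuniq : ∀ b ∈ allB, ∀ b' ∈ allB, ∀ v, v ∈ b → v ∈ b' → b = b' := by
    have hsubp : ∀ p ∈ ps, ∀ b, ((Even p.length ∧ b ∈ pairs p) ∨ (¬Even p.length ∧ b = p)) →
        ∀ v ∈ b, v ∈ p := by
      rintro p hp b (⟨he, hbp⟩ | ⟨he, rfl⟩) v hv
      · exact pairs_sub hbp hv
      · exact hv
    intro b hb b' hb' v hv hv'
    rcases (hmem_allB b).1 hb with ⟨p, hp, hcase⟩ | ⟨t, ht, rfl⟩ <;>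
      rcases (hmem_allB b').1 hb' with ⟨p', hp', hcase'⟩ | ⟨t', ht', rfl⟩
    · have hvp : v ∈ p := hsubp p hp b hcase v hv
      have hvp' : v ∈ p' := hsubp p' hp' b' hcase' v hv'
      have : p = p' := hR2 p hp p' hp' v hvp hvp'
      subst this
      obtain ⟨t₂, w, hpw, -, -, -, hndp⟩ := hR1 p hp
      rcases hcase with ⟨he, hbp⟩ | ⟨he, rfl⟩ <;> rcases hcase' with ⟨he', hbp'⟩ | ⟨he', rfl⟩
      · exact pairs_uniq hndp hbp hbp' hv hv'
      · exact absurd he he'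
      · exact absurd he' he
      · rfl
    · exfalso
      have hvp : v ∈ p := hsubp p hp b hcase v hv
      rcases List.mem_cons.1 hv' with rfl | hv'
      · exact ((hT1left_mem v).1 ht').2 p hp hvp
      · have : v = g' t' := by simpa using hv'
        subst this
        exact hg'notps t' ht' p hp hvp
    · exfalso
      have hvp : v ∈ p' := hsubp p' hp' b' hcase' v hv'
      rcases List.mem_cons.1 hv with rfl | hv
      · exact ((hT1left_mem v).1 ht).2 p' hp' hvp
      · have : v = g' t := by simpa using hv
        subst this
        exact hg'notps t ht p' hp' hvp
    · rcases List.mem_cons.1 hv with rfl | hv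
      · rcases List.mem_cons.1 hv' with h | h
        · rw [← h]
        · have : v = g' t' := by simpa using h
          exact absurd (this ▸ hg'S t' ht') (hTnS _ (hT1 ((hT1left_mem v).1 ht).1))
      · have hvg : v = g' t := by simpa using hv
        subst hvg
        rcases List.mem_cons.1 hv' with h | h
        · exact absurd (h ▸ hg'S t ht) (hTnS _ (hT1 ((hT1left_mem _).1 ht').1))
        · have : g' t = g' t' := by simpa using h
          rw [hg'inj t ht t' ht' this]
  -- shape of blocks
  have hBshape : ∀ b ∈ allB, b.length = 2 ∨ (3 ≤ b.length ∧ ∀ x ∈ b,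
      (x ∈ T₂ ↔ (b.idxOf x = 0 ∨ b.idxOf x = b.length - 1))) := by
    intro b hb
    rcases (hmem_allB b).1 hb with ⟨p, hp, ⟨he, hbp⟩ | ⟨he, rfl⟩⟩ | ⟨t, ht, rfl⟩
    · obtain ⟨a, a', rfl, -⟩ := pairs_shape hbp
      exact Or.inl rfl
    · right
      obtain ⟨t₂, w, hpw, -, hts, -, -⟩ := hR1 b hp
      have hwne : w ≠ [] := hts.ne_nil
      have h1 : 1 ≤ w.length := List.length_pos_iff.2 hwne
      have hlen : 3 ≤ b.length := by
        rw [hpw, List.length_cons]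
        rw [hpw, List.length_cons, Nat.even_iff] at he
        have : Even w.length := by rw [Nat.even_iff]; omega
        rcases this with ⟨k, hk⟩
        omega
      exact ⟨hlen, hEnd b hp he⟩
    · exact Or.inl rfl
  -- coverage
  have hcoverps : ∀ p ∈ ps, ∀ v ∈ p, ∃ b ∈ allB, v ∈ b := by
    intro p hp v hv
    by_cases he : Even p.length
    · obtain ⟨c, hc, hvc⟩ := pairs_cover he hv
      exact ⟨c, (hmem_allB c).2 (Or.inl ⟨p, hp, Or.inl ⟨he, hc⟩⟩), hvc⟩
    · exact ⟨p, (hmem_allB p).2 (Or.inl ⟨p, hp, Or.inr ⟨he, rfl⟩⟩), hv⟩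
  have hcover : ∀ v, v ∈ T₁ ∪ T₂ → ∃ b ∈ allB, v ∈ b := by
    intro v hv
    rcases hv with hv1 | hv2
    · by_cases hvp : ∀ p ∈ ps, v ∉ p
      · have hvleft : v ∈ T1left := (hT1left_mem v).2 ⟨hv1, hvp⟩
        exact ⟨[v, g' v], (hmem_allB _).2 (Or.inr ⟨v, hvleft, rfl⟩), by simp⟩
      · push_neg at hvp
        obtain ⟨p, hp, hvp⟩ := hvp
        exact hcoverps p hp v hvp
    · have : v ∈ T₂f := Finset.mem_filter.2 ⟨Finset.mem_univ _, hv2⟩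
      obtain ⟨p, hp, hvp⟩ := hR3 v this
      exact hcoverps p hp v hvp
  -- apply the generic construction
  obtain ⟨F, hFverts, hFcomp⟩ := blocks_subgraph H allB hBchain hBnodup hBuniq
  refine ⟨F, ?_, ?_⟩
  · intro v hv
    rw [hFverts]
    exact hcover v hv
  · intro A
    obtain ⟨b, hb, hcard, φ, hφ⟩ := hFcomp A
    refine ⟨⟨b.length, ⟨φ⟩⟩, ?_⟩
    rcases hBshape b hb with hlen2 | ⟨hge3, hEndb⟩
    · exact Or.inl (by rw [hcard, hlen2])
    · right
      refine ⟨b.length, by omega, φ, ?_⟩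
      intro v
      obtain ⟨hvb, hidx⟩ := hφ v
      rw [hEndb _ hvb]
      constructor
      · rintro (h | h)
        · exact Or.inl (Fin.ext (by rw [hidx, h]))
        · exact Or.inr (Fin.ext (by rw [hidx, h]))
      · rintro (h | h)
        · left
          have := congrArg Fin.val h
          rw [hidx] at this
          exact this
        · right
          have := congrArg Fin.val h
          rw [hidx] at this
          exact this
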